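/- Let G be a connected 1-scale graph with distinguished vertices v₁, v₂, external momentum q entering at v₁ and exiting at v₂, and all masses zero. Then the second Symanzik polynomial satisfies φ(q, G) = q² · ψ_{G•}, where G• is the graph obtained by identifying v₁ and v₂. -/

import Mathlib

open MvPolynomial

/-- A (multi)graph with vertex type `V` and labelled edge type `E`; each edge has two
(not necessarily distinct) endpoints. -/
structure FeynGraph where
  V : Type
  E : Type
  src : E → V
  tgt : E → V

namespace FeynGraph

variable (G : FeynGraph)

/-- One step along an edge belonging to the edge set `F`. -/
def Step (F : Set G.E) (u v : G.V) : Prop :=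
  ∃ e ∈ F, (G.src e = u ∧ G.tgt e = v) ∨ (G.src e = v ∧ G.tgt e = u)

/-- `u` and `v` are joined by a walk using only edges in `F`. -/
def Conn (F : Set G.E) (u v : G.V) : Prop :=
  Relation.ReflTransGen (G.Step F) u v

/-- The number of connected components of the spanning subgraph with edge set `F`
(on the full vertex set of `G`). -/
noncomputable def ncomp (F : Set G.E) : ℕ :=
  Nat.card (Quot (G.Conn F))

/-- `G` is connected. -/
def IsConnected : Prop := ∀ u v : G.V, G.Conn Set.univ u v

/-- The loop number (first Betti number) `h = |F| + c(F) - |V|` of the spanning subgraph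
with edge set `F`. -/
noncomputable def loops (F : Set G.E) : ℕ :=
  Nat.card F + G.ncomp F - Nat.card G.V

/-- A maximal spanning forest: an edge set inducing the same connectivity relation as the
whole graph, of cardinality `|V| - c(G)` (hence acyclic, one spanning tree in each
connected component; a spanning tree when `G` is connected). -/
def IsSpanningForest (T : Finset G.E) : Prop :=
  (∀ u v : G.V, G.Conn ↑T u v ↔ G.Conn Set.univ u v) ∧
    T.card + G.ncomp Set.univ = Nat.card G.V

open Classical in
/-- The first Symanzik (Kirchhoff) polynomial `ψ_G = Σ_T Π_{e ∉ T} A_e`, the sum being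
over maximal spanning forests (spanning trees, for `G` connected); for a disjoint union
this is the product of the graph polynomials of the components. -/
noncomputable def psi [Finite G.E] : MvPolynomial G.E ℝ :=
  letI := Fintype.ofFinite G.E
  ∑ T : Finset G.E, if G.IsSpanningForest T then ∏ e ∈ Tᶜ, X e else 0

/-- The subgraph of `G` with edge set `F` (on the full vertex set). -/
def restrict (F : Set G.E) : FeynGraph where
  V := G.V
  E := {e : G.E // e ∈ F}
  src := fun e => G.src e.1
  tgt := fun e => G.tgt e.1

/-- The contraction `G/F`: every edge of `F` is contracted to a point. -/
def contract (F : Set G.E) : FeynGraph where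
  V := Quot (G.Conn F)
  E := {e : G.E // e ∉ F}
  src := fun e => Quot.mk _ (G.src e.1)
  tgt := fun e => Quot.mk _ (G.tgt e.1)

/-- The graph `G•` obtained from `G` by identifying the two vertices `v₁` and `v₂`. -/
def ident (v₁ v₂ : G.V) : FeynGraph where
  V := Quot (fun a b : G.V => a = v₁ ∧ b = v₂)
  E := G.E
  src := fun e => Quot.mk _ (G.src e)
  tgt := fun e => Quot.mk _ (G.tgt e)

/-- The graph `Ḡ` obtained from `G` by adding a new edge joining `v₁` and `v₂`
(the new edge being labelled `none`). -/
def addEdge (v₁ v₂ : G.V) : FeynGraph where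
  V := G.V
  E := Option G.E
  src := fun e => e.elim v₁ G.src
  tgt := fun e => e.elim v₂ G.tgt


instance [Finite G.E] (F : Set G.E) : Finite (G.restrict F).E :=
  inferInstanceAs (Finite {e : G.E // e ∈ F})

instance [Finite G.E] (F : Set G.E) : Finite (G.contract F).E :=
  inferInstanceAs (Finite {e : G.E // e ∉ F})

instance [Finite G.V] (F : Set G.E) : Finite (G.contract F).V :=
  inferInstanceAs (Finite (Quot (G.Conn F)))

instance [Finite G.E] (v₁ v₂ : G.V) : Finite (G.ident v₁ v₂).E :=
  inferInstanceAs (Finite G.E)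

instance [Finite G.V] (v₁ v₂ : G.V) : Finite (G.ident v₁ v₂).V :=
  inferInstanceAs (Finite (Quot _))

instance [Finite G.E] (v₁ v₂ : G.V) : Finite (G.addEdge v₁ v₂).E :=
  letI := Fintype.ofFinite G.E
  inferInstanceAs (Finite (Option G.E))

instance [Finite G.V] (v₁ v₂ : G.V) : Finite (G.addEdge v₁ v₂).V :=
  inferInstanceAs (Finite G.V)

end FeynGraph

namespace FeynGraph

/-- The (Euclidean) pairing of four-momenta. -/
def mdot (p q : Fin 4 → ℝ) : ℝ := ∑ i, p i * q i

variable (G : FeynGraph)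

/-- A spanning two-forest: an acyclic edge set with exactly two connected components
(`|T| = |V| - 2` together with two components forces acyclicity). -/
def IsTwoForest (T : Finset G.E) : Prop :=
  T.card + 2 = Nat.card G.V ∧ G.ncomp ↑T = 2

open Classical in
/-- The second Symanzik polynomial
`φ_G = Σ_{T₁∪T₂} (-Q(T₁)·Q(T₂)) Π_{e ∉ T₁∪T₂} A_e`, the sum being over spanning
two-forests; the momentum factor is written as `(Q(T₁)² + Q(T₂)²)/2`, which by momentum
conservation `Q(T₁) = -Q(T₂)` equals `-Q(T₁)·Q(T₂)` (summing the pairings of the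
momenta of all pairs of vertices lying in the same component). -/
noncomputable def phi [Finite G.E] [Finite G.V] (q : G.V → Fin 4 → ℝ) :
    MvPolynomial G.E ℝ :=
  letI := Fintype.ofFinite G.E
  letI := Fintype.ofFinite G.V
  ∑ T : Finset G.E,
    if G.IsTwoForest T then
      MvPolynomial.C
          ((1/2) * ∑ u : G.V, ∑ v : G.V,
            if G.Conn ↑T u v then mdot (q u) (q v) else 0) *
        ∏ e ∈ Tᶜ, MvPolynomial.X e
    else 0

end FeynGraph

namespace FeynGraphAux

open FeynGraph

variable {G : FeynGraph}

lemma step_symm (F : Set G.E) : Symmetric (G.Step F) := by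
  rintro u v ⟨e, he, h | h⟩
  · exact ⟨e, he, Or.inr h⟩
  · exact ⟨e, he, Or.inl h⟩

lemma conn_refl (F : Set G.E) (u : G.V) : G.Conn F u u := Relation.ReflTransGen.refl

lemma conn_symm {F : Set G.E} {u v : G.V} (h : G.Conn F u v) : G.Conn F v u :=
  by
    haveI : Std.Symm (G.Step F) := ⟨fun _ _ hab => step_symm F hab⟩
    exact Std.Symm.symm (r := Relation.ReflTransGen (G.Step F)) _ _ h

lemma conn_trans {F : Set G.E} {u v w : G.V} :
    G.Conn F u v → G.Conn F v w → G.Conn F u w :=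
  Relation.ReflTransGen.trans

lemma conn_equivalence (F : Set G.E) : Equivalence (G.Conn F) :=
  ⟨conn_refl F, conn_symm, conn_trans⟩

lemma conn_quot_eq {F : Set G.E} {u v : G.V} :
    Quot.mk (G.Conn F) u = Quot.mk (G.Conn F) v ↔ G.Conn F u v := by
  rw [Quot.eq, (conn_equivalence F).eqvGen_iff]

lemma conn_mono {F F' : Set G.E} (h : F ⊆ F') {u v : G.V} (hc : G.Conn F u v) :
    G.Conn F' u v :=
  Relation.ReflTransGen.mono (fun _ _ ⟨e, he, hh⟩ => ⟨e, h he, hh⟩) _ _ hc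

instance quotConnFinite [Finite G.V] (F : Set G.E) : Finite (Quot (G.Conn F)) :=
  Finite.of_surjective _ Quot.mk_surjective

lemma rtg_extra {α : Type*} {r : α → α → Prop} {s t u v : α}
    (h : Relation.ReflTransGen
      (fun a b => r a b ∨ (a = s ∧ b = t) ∨ (a = t ∧ b = s)) u v) :
    Relation.ReflTransGen r u v ∨
      (Relation.ReflTransGen r u s ∧ Relation.ReflTransGen r t v) ∨
      (Relation.ReflTransGen r u t ∧ Relation.ReflTransGen r s v) := by
  induction h with
  | refl => exact Or.inl .refl
  | @tail b c hb hstep ih =>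
    rcases hstep with hr | ⟨rfl, rfl⟩ | ⟨rfl, rfl⟩
    · rcases ih with h1 | ⟨h1, h2⟩ | ⟨h1, h2⟩
      · exact Or.inl (h1.tail hr)
      · exact Or.inr (Or.inl ⟨h1, h2.tail hr⟩)
      · exact Or.inr (Or.inr ⟨h1, h2.tail hr⟩)
    · rcases ih with h1 | ⟨h1, h2⟩ | ⟨h1, h2⟩
      · exact Or.inr (Or.inl ⟨h1, .refl⟩)
      · exact Or.inr (Or.inl ⟨h1, .refl⟩)
      · exact Or.inl h1
    · rcases ih with h1 | ⟨h1, h2⟩ | ⟨h1, h2⟩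
      · exact Or.inr (Or.inr ⟨h1, .refl⟩)
      · exact Or.inl h1
      · exact Or.inr (Or.inr ⟨h1, .refl⟩)

lemma conn_insert_cases [DecidableEq G.E] {T : Finset G.E} {e : G.E} {u v : G.V}
    (h : G.Conn ↑(insert e T) u v) :
    G.Conn ↑T u v ∨ (G.Conn ↑T u (G.src e) ∧ G.Conn ↑T (G.tgt e) v) ∨
      (G.Conn ↑T u (G.tgt e) ∧ G.Conn ↑T (G.src e) v) := by
  apply rtg_extra (s := G.src e) (t := G.tgt e)
  refine Relation.ReflTransGen.mono ?_ _ _ h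
  rintro a b ⟨e', he', hh⟩
  rcases Finset.mem_insert.mp (Finset.mem_coe.mp he') with rfl | he'
  · rcases hh with ⟨h1, h2⟩ | ⟨h1, h2⟩
    · exact Or.inr (Or.inl ⟨h1.symm, h2.symm⟩)
    · exact Or.inr (Or.inr ⟨h2.symm, h1.symm⟩)
  · exact Or.inl ⟨e', Finset.mem_coe.mpr he', hh⟩

lemma ncomp_le_insert [Finite G.V] [DecidableEq G.E] (T : Finset G.E) (e : G.E) :
    G.ncomp ↑T ≤ G.ncomp ↑(insert e T) + 1 := by
  classical
  have hmono : ∀ {a b : G.V}, G.Conn ↑T a b → G.Conn ↑(insert e T) a b := fun h =>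
    conn_mono (fun x hx => Finset.mem_coe.mpr
      (Finset.mem_insert_of_mem (Finset.mem_coe.mp hx))) h
  let g : Quot (G.Conn ↑T) → Quot (G.Conn ↑(insert e T)) :=
    Quot.lift (Quot.mk _) (fun _ _ h => Quot.sound (hmono h))
  let f : Quot (G.Conn ↑T) → Option (Quot (G.Conn ↑(insert e T))) :=
    fun c => if c = Quot.mk _ (G.src e) then none else some (g c)
  have hinj : Function.Injective f := by
    intro c₁ c₂ hf
    by_cases h1 : c₁ = Quot.mk (G.Conn ↑T) (G.src e) <;>
      by_cases h2 : c₂ = Quot.mk (G.Conn ↑T) (G.src e)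
    · rw [h1, h2]
    · simp [f, h1, h2] at hf
    · simp [f, h1, h2] at hf
    · simp only [f, if_neg h1, if_neg h2, Option.some.injEq] at hf
      induction c₁ using Quot.ind with | _ a =>
      induction c₂ using Quot.ind with | _ b =>
      have hab : G.Conn ↑(insert e T) a b := conn_quot_eq.mp hf
      rcases conn_insert_cases hab with h | ⟨ha, _⟩ | ⟨_, hb⟩
      · exact conn_quot_eq.mpr h
      · exact absurd (conn_quot_eq.mpr ha) h1
      · exact absurd (conn_quot_eq.mpr (conn_symm hb)) h2
  haveI : Finite (Quot (G.Conn ↑(insert e T))) := quotConnFinite _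
  letI := Fintype.ofFinite (Quot (G.Conn ↑(insert e T)))
  calc G.ncomp ↑T ≤ Nat.card (Option (Quot (G.Conn ↑(insert e T)))) :=
        Nat.card_le_card_of_injective f hinj
  _ = G.ncomp ↑(insert e T) + 1 := by
      simp [FeynGraph.ncomp, Nat.card_eq_fintype_card]

lemma card_le_card_add_ncomp [Finite G.V] (T : Finset G.E) :
    Nat.card G.V ≤ T.card + G.ncomp ↑T := by
  classical
  induction T using Finset.induction_on with
  | empty =>
    simp only [Finset.card_empty, zero_add]
    have hinj : Function.Injective (Quot.mk (G.Conn ↑(∅ : Finset G.E))) := by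
      intro a b h
      have h' := conn_quot_eq.mp h
      induction h' with
      | refl => rfl
      | tail _ hstep ih => exact absurd hstep.choose_spec.1 (by simp)
    exact Nat.card_le_card_of_injective _ hinj
  | @insert e T he ih =>
    calc Nat.card G.V ≤ T.card + G.ncomp ↑T := ih
    _ ≤ T.card + (G.ncomp ↑(insert e T) + 1) :=
        Nat.add_le_add_left (ncomp_le_insert T e) _
    _ = (insert e T).card + G.ncomp ↑(insert e T) := by
        rw [Finset.card_insert_of_notMem he]; ring

end FeynGraphAux
namespace FeynGraphAux

open FeynGraph

variable {G : FeynGraph} {v₁ v₂ : G.V}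

lemma ident_quot_eq {a b : G.V} :
    (Quot.mk (fun a b : G.V => a = v₁ ∧ b = v₂) a =
      Quot.mk (fun a b : G.V => a = v₁ ∧ b = v₂) b) ↔
      a = b ∨ (a = v₁ ∧ b = v₂) ∨ (a = v₂ ∧ b = v₁) := by
  rw [Quot.eq]
  constructor
  · intro h
    induction h with
    | rel x y h => exact Or.inr (Or.inl h)
    | refl x => exact Or.inl rfl
    | symm x y _ ih => tauto
    | trans x y z _ _ ih1 ih2 =>
      rcases ih1 with rfl | ⟨rfl, rfl⟩ | ⟨rfl, rfl⟩ <;>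
        rcases ih2 with rfl | ⟨h1, h2⟩ | ⟨h1, h2⟩ <;> tauto
  · rintro (rfl | ⟨rfl, rfl⟩ | ⟨rfl, rfl⟩)
    · exact Relation.EqvGen.refl _
    · exact Relation.EqvGen.rel _ _ ⟨rfl, rfl⟩
    · exact Relation.EqvGen.symm _ _ (Relation.EqvGen.rel _ _ ⟨rfl, rfl⟩)

lemma card_ident [Finite G.V] (hne : v₁ ≠ v₂) :
    Nat.card (Quot (fun a b : G.V => a = v₁ ∧ b = v₂)) + 1 = Nat.card G.V := by
  classical
  letI := Fintype.ofFinite G.V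
  have hne' : ¬ v₁ = v₂ := hne
  have e : Quot (fun a b : G.V => a = v₁ ∧ b = v₂) ≃ {x : G.V // ¬ x = v₂} :=
    { toFun := Quot.lift (fun a => if h : a = v₂ then ⟨v₁, hne'⟩ else ⟨a, h⟩)
        (by rintro a b ⟨rfl, rfl⟩; simp [hne'])
      invFun := fun x => Quot.mk _ x.1
      left_inv := by
        intro c
        induction c using Quot.ind with | _ a =>
        by_cases h : a = v₂
        · subst h
          simp only [dif_pos]
          exact Quot.sound ⟨rfl, rfl⟩
        · simp [h]
      right_inv := by rintro ⟨x, hx⟩; simp [hx] }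
  rw [Nat.card_congr e, Nat.card_eq_fintype_card, Nat.card_eq_fintype_card]
  have h1 : Fintype.card {x : G.V // ¬ x = v₂} =
      Fintype.card G.V - Fintype.card {x : G.V // x = v₂} :=
    Fintype.card_subtype_compl _
  rw [Fintype.card_subtype_eq] at h1
  have h2 : 1 ≤ Fintype.card G.V := Fintype.card_pos_iff.mpr ⟨v₂⟩
  omega

/-- The "glued" step relation on `G.V`. -/
def glueStep (G : FeynGraph) (v₁ v₂ : G.V) (F : Set G.E) : G.V → G.V → Prop :=
  fun a b => G.Step F a b ∨ (a = v₁ ∧ b = v₂) ∨ (a = v₂ ∧ b = v₁)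

lemma glueStep_symm (F : Set G.E) : Symmetric (glueStep G v₁ v₂ F) := by
  rintro a b (h | ⟨rfl, rfl⟩ | ⟨rfl, rfl⟩)
  · exact Or.inl (step_symm F h)
  · exact Or.inr (Or.inr ⟨rfl, rfl⟩)
  · exact Or.inr (Or.inl ⟨rfl, rfl⟩)

lemma conn_ident_forward {F : Set G.E} {x y : (G.ident v₁ v₂).V}
    (h : (G.ident v₁ v₂).Conn F x y) :
    ∀ u v : G.V, Quot.mk (fun a b : G.V => a = v₁ ∧ b = v₂) u = x →
      Quot.mk (fun a b : G.V => a = v₁ ∧ b = v₂) v = y →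
      Relation.ReflTransGen (glueStep G v₁ v₂ F) u v := by
  induction h with
  | refl =>
    intro u v hu hv
    rcases ident_quot_eq.mp (hu.trans hv.symm) with rfl | ⟨rfl, rfl⟩ | ⟨rfl, rfl⟩
    · exact .refl
    · exact .single (Or.inr (Or.inl ⟨rfl, rfl⟩))
    · exact .single (Or.inr (Or.inr ⟨rfl, rfl⟩))
  | @tail b c hb hstep ih =>
    intro u v hu hv
    obtain ⟨e, he, hcase⟩ := hstep
    rcases hcase with ⟨h1, h2⟩ | ⟨h1, h2⟩
    · have ih' := ih u (G.src e) hu h1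
      have tail1 := ih'.tail (Or.inl ⟨e, he, Or.inl ⟨rfl, rfl⟩⟩)
      have h3 : Quot.mk (fun a b : G.V => a = v₁ ∧ b = v₂) (G.tgt e) =
          Quot.mk (fun a b : G.V => a = v₁ ∧ b = v₂) v := h2.trans hv.symm
      rcases ident_quot_eq.mp h3 with h4 | ⟨h4, h5⟩ | ⟨h4, h5⟩
      · rwa [← h4]
      · exact tail1.tail (Or.inr (Or.inl ⟨h4, h5⟩))
      · exact tail1.tail (Or.inr (Or.inr ⟨h4, h5⟩))
    · have ih' := ih u (G.tgt e) hu h2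
      have tail1 := ih'.tail (Or.inl ⟨e, he, Or.inr ⟨rfl, rfl⟩⟩)
      have h3 : Quot.mk (fun a b : G.V => a = v₁ ∧ b = v₂) (G.src e) =
          Quot.mk (fun a b : G.V => a = v₁ ∧ b = v₂) v := h1.trans hv.symm
      rcases ident_quot_eq.mp h3 with h4 | ⟨h4, h5⟩ | ⟨h4, h5⟩
      · rwa [← h4]
      · exact tail1.tail (Or.inr (Or.inl ⟨h4, h5⟩))
      · exact tail1.tail (Or.inr (Or.inr ⟨h4, h5⟩))

lemma conn_ident_backward {F : Set G.E} {u v : G.V}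
    (h : Relation.ReflTransGen (glueStep G v₁ v₂ F) u v) :
    (G.ident v₁ v₂).Conn F (Quot.mk (fun a b : G.V => a = v₁ ∧ b = v₂) u)
      (Quot.mk (fun a b : G.V => a = v₁ ∧ b = v₂) v) := by
  induction h with
  | refl => exact .refl
  | @tail b c hb hstep ih =>
    rcases hstep with ⟨e, he, hh⟩ | hp | hp
    · refine ih.tail ⟨e, he, ?_⟩
      rcases hh with ⟨h1, h2⟩ | ⟨h1, h2⟩
      · exact Or.inl ⟨congrArg (Quot.mk _) h1, congrArg (Quot.mk _) h2⟩
      · exact Or.inr ⟨congrArg (Quot.mk _) h1, congrArg (Quot.mk _) h2⟩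
    · have hq : Quot.mk (fun a b : G.V => a = v₁ ∧ b = v₂) b =
          Quot.mk (fun a b : G.V => a = v₁ ∧ b = v₂) c :=
        ident_quot_eq.mpr (Or.inr (Or.inl hp))
      rwa [← hq]
    · have hq : Quot.mk (fun a b : G.V => a = v₁ ∧ b = v₂) b =
          Quot.mk (fun a b : G.V => a = v₁ ∧ b = v₂) c :=
        ident_quot_eq.mpr (Or.inr (Or.inr hp))
      rwa [← hq]

lemma conn_ident_iff (F : Set G.E) (u v : G.V) :
    (G.ident v₁ v₂).Conn F (Quot.mk (fun a b : G.V => a = v₁ ∧ b = v₂) u)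
      (Quot.mk (fun a b : G.V => a = v₁ ∧ b = v₂) v) ↔
      Relation.ReflTransGen (glueStep G v₁ v₂ F) u v :=
  ⟨fun h => conn_ident_forward h u v rfl rfl, conn_ident_backward⟩

lemma ident_conn_univ (hconn : G.IsConnected) (x y : (G.ident v₁ v₂).V) :
    (G.ident v₁ v₂).Conn Set.univ x y := by
  induction x using Quot.ind with | _ u =>
  induction y using Quot.ind with | _ v =>
  exact conn_ident_backward (Relation.ReflTransGen.mono (fun a b h => Or.inl h) _ _ (hconn u v))

lemma ident_ncomp_univ [Finite G.V] (v₁ v₂ : G.V) (hconn : G.IsConnected) :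
    (G.ident v₁ v₂).ncomp Set.univ = 1 := by
  rw [FeynGraph.ncomp, Nat.card_eq_one_iff_unique]
  refine ⟨⟨fun a b => ?_⟩, ⟨Quot.mk _ (Quot.mk _ v₁)⟩⟩
  induction a using Quot.ind with | _ x =>
  induction b using Quot.ind with | _ y =>
  exact Quot.sound (ident_conn_univ hconn x y)

lemma nat_card_eq_two {α : Type*} [Finite α] {a b : α} (hab : a ≠ b)
    (h : ∀ x, x = a ∨ x = b) : Nat.card α = 2 := by
  classical
  letI := Fintype.ofFinite α
  rw [Nat.card_eq_fintype_card]
  have huniv : ({a, b} : Finset α) = Finset.univ := by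
    apply Finset.eq_univ_iff_forall.mpr
    intro x; rcases h x with rfl | rfl <;> simp
  rw [← Finset.card_univ, ← huniv, Finset.card_pair hab]

lemma nat_card_two_cases {α : Type*} [Finite α] {a b : α} (hab : a ≠ b)
    (h : Nat.card α = 2) (x : α) : x = a ∨ x = b := by
  classical
  letI := Fintype.ofFinite α
  rw [Nat.card_eq_fintype_card] at h
  have huniv := Finset.eq_univ_of_card ({a, b} : Finset α)
    (by rw [Finset.card_pair hab, h])
  have hx : x ∈ ({a, b} : Finset α) := huniv ▸ Finset.mem_univ x
  simpa using hx

end FeynGraphAux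
namespace FeynGraphAux

open FeynGraph

variable {G : FeynGraph}

lemma forest_iff [Finite G.V] [Finite G.E] (hconn : G.IsConnected)
    {v₁ v₂ : G.V} (hne : v₁ ≠ v₂) (T : Finset G.E) :
    (G.ident v₁ v₂).IsSpanningForest T ↔
      (G.IsTwoForest T ∧ ¬ G.Conn ↑T v₁ v₂) := by
  have htotal : ∀ x y, (G.ident v₁ v₂).Conn Set.univ x y := ident_conn_univ hconn
  have hcard : Nat.card (G.ident v₁ v₂).V + 1 = Nat.card G.V := card_ident hne
  have hnc : (G.ident v₁ v₂).ncomp Set.univ = 1 := ident_ncomp_univ v₁ v₂ hconn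
  constructor
  · rintro ⟨hConn, hCard⟩
    rw [hnc] at hCard
    have hcard2 : T.card + 2 = Nat.card G.V := by
      have hC : T.card + 1 = Nat.card (G.ident v₁ v₂).V := hCard
      omega
    have hAll : ∀ u v : G.V, Relation.ReflTransGen (glueStep G v₁ v₂ ↑T) u v := by
      intro u v
      exact (conn_ident_iff ↑T u v).mp
        ((hConn (Quot.mk _ u) (Quot.mk _ v)).mpr (htotal _ _))
    have hnoconn : ¬ G.Conn ↑T v₁ v₂ := by
      intro hcv
      have hall' : ∀ u v : G.V, G.Conn ↑T u v := by
        intro u v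
        rcases rtg_extra (hAll u v) with h | ⟨h1, h2⟩ | ⟨h1, h2⟩
        · exact h
        · exact conn_trans (conn_trans h1 hcv) h2
        · exact conn_trans (conn_trans h1 (conn_symm hcv)) h2
      have h1 : G.ncomp ↑T = 1 := by
        rw [FeynGraph.ncomp, Nat.card_eq_one_iff_unique]
        refine ⟨⟨fun a b => ?_⟩, ⟨Quot.mk _ v₁⟩⟩
        induction a using Quot.ind with | _ x =>
        induction b using Quot.ind with | _ y =>
        exact Quot.sound (hall' x y)
      have h2 := card_le_card_add_ncomp (G := G) T
      omega
    refine ⟨⟨hcard2, ?_⟩, hnoconn⟩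
    show Nat.card (Quot (G.Conn ↑T)) = 2
    apply nat_card_eq_two (a := Quot.mk (G.Conn ↑T) v₁) (b := Quot.mk (G.Conn ↑T) v₂)
    · intro h; exact hnoconn (conn_quot_eq.mp h)
    · intro x
      induction x using Quot.ind with | _ u =>
      rcases rtg_extra (hAll u v₁) with h | ⟨h1, _⟩ | ⟨h1, _⟩
      · exact Or.inl (conn_quot_eq.mpr h)
      · exact Or.inl (conn_quot_eq.mpr h1)
      · exact Or.inr (conn_quot_eq.mpr h1)
  · rintro ⟨⟨hcard2, hnc2⟩, hnoconn⟩
    have hab : Quot.mk (G.Conn ↑T) v₁ ≠ Quot.mk (G.Conn ↑T) v₂ :=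
      fun h => hnoconn (conn_quot_eq.mp h)
    have hquot2 : ∀ x : Quot (G.Conn ↑T),
        x = Quot.mk (G.Conn ↑T) v₁ ∨ x = Quot.mk (G.Conn ↑T) v₂ :=
      fun x => nat_card_two_cases hab hnc2 x
    have hAll : ∀ u w : G.V, Relation.ReflTransGen (glueStep G v₁ v₂ ↑T) u w := by
      have hsym : ∀ {a b : G.V}, Relation.ReflTransGen (glueStep G v₁ v₂ ↑T) a b →
          Relation.ReflTransGen (glueStep G v₁ v₂ ↑T) b a :=
        fun h => by
          haveI : Std.Symm (glueStep G v₁ v₂ ↑T) := ⟨fun _ _ hab => glueStep_symm (↑T : Set G.E) hab⟩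
          exact Std.Symm.symm (r := Relation.ReflTransGen (glueStep G v₁ v₂ ↑T)) _ _ h
      have hv12 : Relation.ReflTransGen (glueStep G v₁ v₂ ↑T) v₁ v₂ :=
        .single (Or.inr (Or.inl ⟨rfl, rfl⟩))
      have key : ∀ u, Relation.ReflTransGen (glueStep G v₁ v₂ ↑T) u v₁ := by
        intro u
        rcases hquot2 (Quot.mk _ u) with h | h
        · exact Relation.ReflTransGen.mono (fun a b hs => Or.inl hs) _ _ (conn_quot_eq.mp h)
        · have h' : Relation.ReflTransGen (glueStep G v₁ v₂ ↑T) u v₂ :=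
            Relation.ReflTransGen.mono (fun a b hs => Or.inl hs) _ _ (conn_quot_eq.mp h)
          exact h'.trans (hsym hv12)
      intro u w
      exact (key u).trans (hsym (key w))
    constructor
    · intro x y
      refine ⟨fun _ => htotal x y, fun _ => ?_⟩
      induction x using Quot.ind with | _ u =>
      induction y using Quot.ind with | _ v =>
      exact (conn_ident_iff ↑T u v).mpr (hAll u v)
    · rw [hnc]; show T.card + 1 = Nat.card (G.ident v₁ v₂).V; omega

end FeynGraphAux
open FeynGraph MvPolynomial in
open Classical in
/-- For a connected 1-scale graph `G` (external momentum `q` entering at `v₁`, exiting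
at `v₂`, all other momenta and all masses zero), the second Symanzik polynomial is
`φ(q,G) = q² · ψ_{G•}`, where `G•` is obtained from `G` by identifying `v₁` and `v₂`. -/
theorem phi_one_scale_eq_q_sq_mul_psi_bullet (G : FeynGraph) [Finite G.V] [Finite G.E]
    (hconn : G.IsConnected) (v₁ v₂ : G.V) (hne : v₁ ≠ v₂) (p : Fin 4 → ℝ) :
    G.phi (fun v => if v = v₁ then p else if v = v₂ then -p else 0) =
      MvPolynomial.C (mdot p p) *
        (FeynGraph.psi (G.ident v₁ v₂) : MvPolynomial G.E ℝ) := by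
  classical
  letI := Fintype.ofFinite G.E
  letI := Fintype.ofFinite G.V
  have hmom : ∀ T : Finset G.E,
      ((1/2 : ℝ) * ∑ u : G.V, ∑ v : G.V,
        (if G.Conn ↑T u v then
          mdot (if u = v₁ then p else if u = v₂ then -p else 0)
            (if v = v₁ then p else if v = v₂ then -p else 0) else 0)) =
      (if G.Conn ↑T v₁ v₂ then 0 else mdot p p) := by
    intro T
    set q : G.V → Fin 4 → ℝ := fun v => if v = v₁ then p else if v = v₂ then -p else 0
      with hqdef
    have hq1 : q v₁ = p := by simp [hqdef]
    have hq2 : q v₂ = -p := by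
      have : ¬ v₂ = v₁ := fun h => hne h.symm
      simp [hqdef, this]
    have hq0 : ∀ u, u ≠ v₁ → u ≠ v₂ → q u = 0 := by
      intro u h1 h2; simp [hqdef, h1, h2]
    have hmdot0 : ∀ x : Fin 4 → ℝ, FeynGraph.mdot 0 x = 0 := by
      intro x; simp [FeynGraph.mdot]
    have hmnn : ∀ x y : Fin 4 → ℝ, FeynGraph.mdot (-x) (-y) = FeynGraph.mdot x y := by
      intro x y; simp [FeynGraph.mdot]
    have hmr : ∀ x y : Fin 4 → ℝ, FeynGraph.mdot x (-y) = -FeynGraph.mdot x y := by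
      intro x y
      simp only [FeynGraph.mdot, Pi.neg_apply, mul_neg, ← Finset.sum_neg_distrib]
    have hml : ∀ x y : Fin 4 → ℝ, FeynGraph.mdot (-x) y = -FeynGraph.mdot x y := by
      intro x y
      simp only [FeynGraph.mdot, Pi.neg_apply, neg_mul, ← Finset.sum_neg_distrib]
    have hinner : ∀ u, (∑ v : G.V, if G.Conn ↑T u v then mdot (q u) (q v) else 0) =
        ∑ v ∈ ({v₁, v₂} : Finset G.V), (if G.Conn ↑T u v then mdot (q u) (q v) else 0) := by
      intro u
      symm
      apply Finset.sum_subset (Finset.subset_univ _)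
      intro v _ hv
      simp only [Finset.mem_insert, Finset.mem_singleton, not_or] at hv
      rw [hq0 v hv.1 hv.2]
      split
      · simp [FeynGraph.mdot]
      · rfl
    have houter : (∑ u : G.V, ∑ v : G.V, (if G.Conn ↑T u v then mdot (q u) (q v) else 0)) =
        ∑ u ∈ ({v₁, v₂} : Finset G.V), ∑ v : G.V,
          (if G.Conn ↑T u v then mdot (q u) (q v) else 0) := by
      symm
      apply Finset.sum_subset (Finset.subset_univ _)
      intro u _ hu
      simp only [Finset.mem_insert, Finset.mem_singleton, not_or] at hu
      apply Finset.sum_eq_zero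
      intro v _
      rw [hq0 u hu.1 hu.2]
      split
      · simp [FeynGraph.mdot]
      · rfl
    rw [houter, Finset.sum_pair hne, hinner v₁, hinner v₂,
      Finset.sum_pair hne, Finset.sum_pair hne]
    rw [if_pos (FeynGraphAux.conn_refl (↑T : Set G.E) v₁), if_pos (FeynGraphAux.conn_refl (↑T : Set G.E) v₂)]
    rw [hq1, hq2, hmnn, hmr]
    by_cases hc : G.Conn ↑T v₁ v₂
    · rw [if_pos hc, if_pos (FeynGraphAux.conn_symm hc), if_pos hc, hml]
      ring
    · rw [if_neg hc, if_neg (fun h => hc (FeynGraphAux.conn_symm h)), if_neg hc]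
      ring
  show (∑ T : Finset G.E,
      if G.IsTwoForest T then
        MvPolynomial.C ((1/2 : ℝ) * ∑ u : G.V, ∑ v : G.V,
          (if G.Conn ↑T u v then
            mdot (if u = v₁ then p else if u = v₂ then -p else 0)
              (if v = v₁ then p else if v = v₂ then -p else 0) else 0)) *
          ∏ e ∈ Tᶜ, (MvPolynomial.X e : MvPolynomial G.E ℝ)
      else 0) =
    (MvPolynomial.C (mdot p p) : MvPolynomial G.E ℝ) * ∑ T : Finset G.E,
      (if (G.ident v₁ v₂).IsSpanningForest T then
        ∏ e ∈ Tᶜ, (MvPolynomial.X e : MvPolynomial G.E ℝ) else 0)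
  rw [Finset.mul_sum]
  apply Finset.sum_congr rfl
  intro T _
  rw [hmom T]
  by_cases hTF : G.IsTwoForest T
  · rw [if_pos hTF]
    by_cases hc : G.Conn ↑T v₁ v₂
    · rw [if_pos hc,
        if_neg (fun hsf => (((FeynGraphAux.forest_iff hconn hne T).mp hsf).2 hc))]
      simp
    · rw [if_neg hc, if_pos ((FeynGraphAux.forest_iff hconn hne T).mpr ⟨hTF, hc⟩)]
  · rw [if_neg hTF,
      if_neg (fun hsf => hTF ((FeynGraphAux.forest_iff hconn hne T).mp hsf).1),
      mul_zero]
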